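/- For a nonempty compact set K ⊂ ℝ^n, the function δ(x) = dist(x, K)² is locally Lipschitz, and at any point x₀ its Clarke generalized gradient ∂δ(x₀) is contained in the convex hull of {2(x₀ − y) : y ∈ m(x₀)}, where m(x₀) is the set of closest points to x₀ in K. -/

import Mathlib

open Filter Topology

lemma hasFDerivAt_inner_sub {n : ℕ} (y x : EuclideanSpace ℝ (Fin n)) :
    HasFDerivAt (fun z : EuclideanSpace ℝ (Fin n) => (inner ℝ (z - y) (z - y) : ℝ))
      ((2 : ℝ) • innerSL ℝ (x - y)) x := by
  have h := ((hasFDerivAt_id x).sub_const y).inner ℝ ((hasFDerivAt_id x).sub_const y)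
  refine h.congr_fderiv ?_
  ext v
  simp only [ContinuousLinearMap.smul_apply, innerSL_apply_apply, ContinuousLinearMap.comp_apply,
    ContinuousLinearMap.prod_apply, ContinuousLinearMap.coe_id', id_eq, fderivInnerCLM_apply,
    smul_eq_mul]
  rw [real_inner_comm]
  ring

lemma fderiv_sq_infDist {n : ℕ} {K : Set (EuclideanSpace ℝ (Fin n))}
    {δ : EuclideanSpace ℝ (Fin n) → ℝ} (hδ : ∀ x, δ x = Metric.infDist x K ^ 2)
    {x y : EuclideanSpace ℝ (Fin n)} (hy : y ∈ K)
    (hxy : Metric.infDist x K = dist x y) (hd : DifferentiableAt ℝ δ x) :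
    fderiv ℝ δ x = (2 : ℝ) • innerSL ℝ (x - y) := by
  set g : EuclideanSpace ℝ (Fin n) → ℝ := fun z => (inner ℝ (z - y) (z - y) : ℝ) with hg
  have hgd : HasFDerivAt g ((2 : ℝ) • innerSL ℝ (x - y)) x := hasFDerivAt_inner_sub y x
  have hle : ∀ z, δ z - g z ≤ 0 := by
    intro z
    have h1 : Metric.infDist z K ≤ dist z y := Metric.infDist_le_dist_of_mem hy
    have h2 : (0:ℝ) ≤ Metric.infDist z K := Metric.infDist_nonneg
    have : δ z ≤ dist z y ^ 2 := by
      rw [hδ]; exact pow_le_pow_left₀ h2 h1 2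
    have hgz : g z = dist z y ^ 2 := by
      rw [hg]; simp only [real_inner_self_eq_norm_sq, dist_eq_norm]
    linarith [hgz ▸ this]
  have hx0 : δ x - g x = 0 := by
    have hgx : g x = dist x y ^ 2 := by
      rw [hg]; simp only [real_inner_self_eq_norm_sq, dist_eq_norm]
    rw [hδ, hxy, hgx]; ring
  have hmax : IsLocalMax (fun z => δ z - g z) x := by
    apply Filter.Eventually.of_forall
    intro z
    simpa [hx0] using hle z
  have h0 : fderiv ℝ (fun z => δ z - g z) x = 0 := hmax.fderiv_eq_zero
  rw [fderiv_fun_sub hd hgd.differentiableAt, hgd.fderiv, sub_eq_zero] at h0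
  exact h0

/-- The Clarke generalized gradient. -/
noncomputable def clarkeGradient {E : Type*} [NormedAddCommGroup E] [NormedSpace ℝ E]
    (f : E → ℝ) (a : E) : Set (E →L[ℝ] ℝ) :=
  convexHull ℝ {L | ∃ u : ℕ → E, (∀ n, DifferentiableAt ℝ f (u n)) ∧
    Tendsto u atTop (𝓝 a) ∧ Tendsto (fun n => fderiv ℝ f (u n)) atTop (𝓝 L)}

/-- For a nonempty compact `K`, `δ(x) = dist(x, K)²` is locally Lipschitz, and its
Clarke generalized gradient at `x₀` is contained in the convex hull of
`{2⟨x₀ - y, ·⟩ : y a closest point to x₀ in K}`. -/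
theorem clarkeGradient_sq_dist_subset (n : ℕ) (K : Set (EuclideanSpace ℝ (Fin n)))
    (hKne : K.Nonempty) (hKc : IsCompact K)
    (δ : EuclideanSpace ℝ (Fin n) → ℝ) (hδ : ∀ x, δ x = Metric.infDist x K ^ 2)
    (x₀ : EuclideanSpace ℝ (Fin n)) :
    LocallyLipschitz δ ∧
      clarkeGradient δ x₀ ⊆
        convexHull ℝ {L : EuclideanSpace ℝ (Fin n) →L[ℝ] ℝ |
          ∃ y ∈ {y ∈ K | ‖x₀ - y‖ = Metric.infDist x₀ K},
            L = (2 : ℝ) • innerSL ℝ (x₀ - y)} := by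
  constructor
  · -- Locally Lipschitz
    have hδeq : δ = (fun t : ℝ => t ^ 2) ∘ (fun x => Metric.infDist x K) := funext hδ
    rw [hδeq]
    exact ((contDiff_id (𝕜 := ℝ)).pow 2).locallyLipschitz.comp
      (Metric.lipschitz_infDist_pt K).locallyLipschitz
  · -- Clarke gradient inclusion
    apply convexHull_mono
    rintro L ⟨u, hdiff, hu, hL⟩
    choose y hyK hyd using fun m => hKc.exists_infDist_eq_dist hKne (u m)
    obtain ⟨z, hzK, φ, hφ, hyz⟩ := hKc.tendsto_subseq hyK
    have huφ : Tendsto (fun m => u (φ m)) atTop (𝓝 x₀) := hu.comp hφ.tendsto_atTop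
    have hsub : Tendsto (fun m => u (φ m) - y (φ m)) atTop (𝓝 (x₀ - z)) := huφ.sub hyz
    have h2 : Tendsto (fun m => (2 : ℝ) • innerSL ℝ (u (φ m) - y (φ m))) atTop
        (𝓝 ((2 : ℝ) • innerSL ℝ (x₀ - z))) :=
      (((innerSL ℝ).continuous.tendsto (x₀ - z)).comp hsub).const_smul (2 : ℝ)
    have heq : ∀ m, fderiv ℝ δ (u (φ m)) = (2 : ℝ) • innerSL ℝ (u (φ m) - y (φ m)) :=
      fun m => fderiv_sq_infDist hδ (hyK (φ m)) (hyd (φ m)) (hdiff (φ m))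
    have hLeq : L = (2 : ℝ) • innerSL ℝ (x₀ - z) := by
      refine tendsto_nhds_unique (hL.comp hφ.tendsto_atTop) ?_
      simpa only [Function.comp_def, heq] using h2
    have hdist : ‖x₀ - z‖ = Metric.infDist x₀ K := by
      have h1 : Tendsto (fun m => Metric.infDist (u (φ m)) K) atTop
          (𝓝 (Metric.infDist x₀ K)) :=
        ((Metric.lipschitz_infDist_pt K).continuous.tendsto x₀).comp huφ
      have h2' : Tendsto (fun m => dist (u (φ m)) (y (φ m))) atTop (𝓝 (dist x₀ z)) :=
        huφ.dist hyz
      have := tendsto_nhds_unique h1 (by simpa only [hyd] using h2' : Tendsto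
        (fun m => Metric.infDist (u (φ m)) K) atTop (𝓝 (dist x₀ z)))
      rw [this, dist_eq_norm]
    exact ⟨z, ⟨hzK, hdist⟩, hLeq⟩
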